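/- Let ρ ∈ (0,1) and let Ḡ ∈ ℝ^{n×n} be diagonalizable over ℝ with Ḡ = Q E Q^{-1}, where Q ∈ ℝ^{n×n} is invertible and E ∈ ℝ^{n×n} is diagonal with |E_{ii}| ≤ ρ for all i (i.e. the spectral radius of Ḡ is at most ρ). Let B̄ ∈ ℝ^{n×m}, c₁ > 0, and let (G_k)_{k∈ℕ} in ℝ^{n×n} and (B_k)_{k∈ℕ} in ℝ^{n×m} satisfy ‖G_k − Ḡ‖_op ≤ c₁ ρ^{k+1} and ‖B_k − B̄‖ ≤ c₁ ρ^{k+1} for all k ∈ ℕ. Define D_{k+1} = G_k D_k + B_k from any D_0 ∈ ℝ^{n×m} and set D̄ = (I − Ḡ)^{-1} B̄. Then for all k ∈ ℕ: ‖D_k − D̄‖ ≤ ρ^{k/2} · ‖Q‖_op ‖Q^{-1}‖_op · exp( c₁ ‖Q^{-1}‖_op (1 + ‖Q‖_op) √ρ (1 + ‖Q^{-1}‖_op ‖B̄‖)/(1−ρ)² ) · ( ‖D_0‖ + ‖B̄‖/(1−ρ) + c₁ (1 + ‖Q‖_op) √ρ (1 + ‖B̄‖)/(1−√ρ)² ).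 -/

import Mathlib

open Matrix

/-- Frobenius norm of a real matrix. -/
noncomputable def frobNorm {n m : ℕ} (M : Matrix (Fin n) (Fin m) ℝ) : ℝ :=
  Real.sqrt (∑ i, ∑ j, (M i j) ^ 2)

/-- Operator norm (induced by the Euclidean norms) of a real matrix. -/
noncomputable def l2OpNorm {n m : ℕ} (M : Matrix (Fin n) (Fin m) ℝ) : ℝ :=
  ‖LinearMap.toContinuousLinearMap (Matrix.toEuclideanLin M)‖

section helpers

lemma frobNorm_nonneg {n m : ℕ} (M : Matrix (Fin n) (Fin m) ℝ) : 0 ≤ frobNorm M :=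
  Real.sqrt_nonneg _

lemma frobNorm_eq_norm {n m : ℕ} (M : Matrix (Fin n) (Fin m) ℝ) :
    frobNorm M = ‖(WithLp.equiv 2 (Fin n × Fin m → ℝ)).symm (fun p => M p.1 p.2)‖ := by
  rw [EuclideanSpace.norm_eq, frobNorm]
  congr 1
  rw [Fintype.sum_prod_type]
  refine Finset.sum_congr rfl fun i _ => Finset.sum_congr rfl fun j _ => ?_
  simp [sq_abs]

lemma frobNorm_add_le {n m : ℕ} (A B : Matrix (Fin n) (Fin m) ℝ) :
    frobNorm (A + B) ≤ frobNorm A + frobNorm B := by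
  rw [frobNorm_eq_norm, frobNorm_eq_norm, frobNorm_eq_norm]
  have h : (WithLp.equiv 2 (Fin n × Fin m → ℝ)).symm (fun p => (A + B) p.1 p.2) =
      (WithLp.equiv 2 (Fin n × Fin m → ℝ)).symm (fun p => A p.1 p.2) +
      (WithLp.equiv 2 (Fin n × Fin m → ℝ)).symm (fun p => B p.1 p.2) := by
    ext p
    simp [Matrix.add_apply]
  rw [h]
  exact norm_add_le _ _

lemma frobNorm_neg {n m : ℕ} (A : Matrix (Fin n) (Fin m) ℝ) : frobNorm (-A) = frobNorm A := by
  unfold frobNorm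
  congr 1
  refine Finset.sum_congr rfl fun i _ => Finset.sum_congr rfl fun j _ => ?_
  simp

lemma frobNorm_sub_le {n m : ℕ} (A B : Matrix (Fin n) (Fin m) ℝ) :
    frobNorm (A - B) ≤ frobNorm A + frobNorm B := by
  rw [sub_eq_add_neg]
  calc frobNorm (A + -B) ≤ frobNorm A + frobNorm (-B) := frobNorm_add_le _ _
    _ = frobNorm A + frobNorm B := by rw [frobNorm_neg]

lemma col_norm_sq {n m : ℕ} (X : Matrix (Fin n) (Fin m) ℝ) (j : Fin m) :
    ‖(WithLp.equiv 2 (Fin n → ℝ)).symm (fun i => X i j)‖ ^ 2 = ∑ i, (X i j) ^ 2 := by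
  rw [EuclideanSpace.norm_eq, Real.sq_sqrt (by positivity)]
  refine Finset.sum_congr rfl fun i _ => by simp [sq_abs]

lemma frobNorm_mul_le {p n m : ℕ} (M : Matrix (Fin p) (Fin n) ℝ) (X : Matrix (Fin n) (Fin m) ℝ) :
    frobNorm (M * X) ≤ l2OpNorm M * frobNorm X := by
  have key : ∀ j : Fin m, ∑ i, ((M * X) i j) ^ 2 ≤ (l2OpNorm M) ^ 2 * ∑ i, (X i j) ^ 2 := by
    intro j
    set L := LinearMap.toContinuousLinearMap (Matrix.toEuclideanLin M) with hL
    have h1 : L ((WithLp.equiv 2 (Fin n → ℝ)).symm (fun i => X i j)) =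
        (WithLp.equiv 2 (Fin p → ℝ)).symm (fun i => (M * X) i j) := by
      show Matrix.toEuclideanLin M _ = _
      exact congrArg (WithLp.toLp 2) (funext fun i => rfl)
    have h2 := L.le_opNorm ((WithLp.equiv 2 (Fin n → ℝ)).symm (fun i => X i j))
    rw [h1] at h2
    have h3 : ‖(WithLp.equiv 2 (Fin p → ℝ)).symm (fun i => (M * X) i j)‖ ^ 2 ≤
        (‖L‖ * ‖(WithLp.equiv 2 (Fin n → ℝ)).symm (fun i => X i j)‖) ^ 2 :=
      pow_le_pow_left₀ (norm_nonneg _) h2 2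
    rw [col_norm_sq, mul_pow, col_norm_sq] at h3
    exact h3
  have hswap : frobNorm (M * X) = Real.sqrt (∑ j, ∑ i, ((M * X) i j) ^ 2) := by
    rw [frobNorm, Finset.sum_comm]
  have hswap2 : frobNorm X = Real.sqrt (∑ j, ∑ i, (X i j) ^ 2) := by
    rw [frobNorm, Finset.sum_comm]
  rw [hswap, hswap2]
  have h4 : ∑ j, ∑ i, ((M * X) i j) ^ 2 ≤ (l2OpNorm M) ^ 2 * ∑ j, ∑ i, (X i j) ^ 2 := by
    rw [Finset.mul_sum]
    exact Finset.sum_le_sum fun j _ => key j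
  calc Real.sqrt (∑ j, ∑ i, ((M * X) i j) ^ 2) ≤
      Real.sqrt ((l2OpNorm M) ^ 2 * ∑ j, ∑ i, (X i j) ^ 2) := Real.sqrt_le_sqrt h4
    _ = l2OpNorm M * Real.sqrt (∑ j, ∑ i, (X i j) ^ 2) := by
        rw [Real.sqrt_mul (sq_nonneg _), Real.sqrt_sq (show (0:ℝ) ≤ l2OpNorm M from norm_nonneg _)]

lemma frobNorm_diag_mul_le {n m : ℕ} (f : Fin n → ℝ) (r : ℝ) (hr : 0 ≤ r)
    (hf : ∀ i, |f i| ≤ r) (X : Matrix (Fin n) (Fin m) ℝ) :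
    frobNorm (Matrix.diagonal f * X) ≤ r * frobNorm X := by
  unfold frobNorm
  have h : ∑ i, ∑ j, ((Matrix.diagonal f * X) i j) ^ 2 ≤ r ^ 2 * ∑ i, ∑ j, (X i j) ^ 2 := by
    rw [Finset.mul_sum]
    refine Finset.sum_le_sum fun i _ => ?_
    rw [Finset.mul_sum]
    refine Finset.sum_le_sum fun j _ => ?_
    rw [Matrix.diagonal_mul, mul_pow]
    have : (f i) ^ 2 ≤ r ^ 2 := sq_le_sq' (neg_le_of_abs_le (hf i)) (le_of_abs_le (hf i))
    exact mul_le_mul_of_nonneg_right this (sq_nonneg _)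
  calc Real.sqrt (∑ i, ∑ j, ((Matrix.diagonal f * X) i j) ^ 2) ≤
      Real.sqrt (r ^ 2 * ∑ i, ∑ j, (X i j) ^ 2) := Real.sqrt_le_sqrt h
    _ = r * Real.sqrt (∑ i, ∑ j, (X i j) ^ 2) := by
        rw [Real.sqrt_mul (sq_nonneg _), Real.sqrt_sq hr]

lemma my_geom_le (x : ℝ) (h0 : 0 ≤ x) (h1 : x < 1) (k : ℕ) :
    ∑ j ∈ Finset.range k, x ^ j ≤ (1 - x)⁻¹ := by
  have h2 : (0:ℝ) < 1 - x := by linarith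
  rw [inv_eq_one_div, le_div_iff₀ h2]
  nlinarith [geom_sum_mul x k, pow_nonneg h0 k]

lemma ind_step (s c ρ : ℝ) (j : ℕ) (yj yj1 y0 u Sρ Ss : ℝ)
    (hs0 : 0 < s) (hs1 : s < 1) (hss : s * s = ρ) (hc : 0 ≤ c)
    (hy0 : 0 ≤ y0) (hu : 0 ≤ u) (hSρ : 0 ≤ Sρ) (hSs : 0 ≤ Ss)
    (hrec : yj1 ≤ (ρ + c * ρ ^ (j + 1)) * yj + u * ρ ^ (j + 1))
    (ih : yj ≤ s ^ j * (Real.exp (c * s * Sρ) * (y0 + u * Ss))) :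
    yj1 ≤ s ^ (j + 1) * (Real.exp (c * s * (Sρ + ρ ^ j)) * (y0 + u * (Ss + s ^ (j + 1)))) := by
  have hρ0 : 0 < ρ := by rw [← hss]; positivity
  have hρ1 : ρ < 1 := by nlinarith
  set A := Real.exp (c * s * Sρ) with hA
  set EE := Real.exp (c * s * ρ ^ j) with hEE
  have hA1 : 1 ≤ A := Real.one_le_exp (by positivity)
  have hEE1 : 1 ≤ EE := Real.one_le_exp (by positivity)
  have hZ0 : 0 ≤ y0 + u * Ss := by positivity
  have hAZ : 0 ≤ A * (y0 + u * Ss) := mul_nonneg (by linarith) hZ0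
  have hEEs : s + c * s * ρ ^ j ≤ EE := by
    have := Real.add_one_le_exp (c * s * ρ ^ j)
    rw [hEE]; linarith
  have h1 : yj1 ≤ (ρ + c * ρ ^ (j + 1)) * (s ^ j * (A * (y0 + u * Ss))) + u * ρ ^ (j + 1) := by
    have hcoef : (0:ℝ) ≤ ρ + c * ρ ^ (j + 1) := by positivity
    have := mul_le_mul_of_nonneg_left ih hcoef
    linarith
  have halg : (ρ + c * ρ ^ (j + 1)) * (s ^ j * (A * (y0 + u * Ss))) + u * ρ ^ (j + 1)
      = s ^ (j + 1) * ((s + c * s * ρ ^ j) * (A * (y0 + u * Ss)) + u * s ^ (j + 1)) := by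
    rw [← hss]; ring
  have hEA1 : 1 ≤ EE * A := by
    have := mul_le_mul hEE1 hA1 zero_le_one (by linarith)
    linarith
  have hfin : (s + c * s * ρ ^ j) * (A * (y0 + u * Ss)) + u * s ^ (j + 1)
      ≤ EE * (A * (y0 + u * Ss + u * s ^ (j + 1))) := by
    have c1 : (s + c * s * ρ ^ j) * (A * (y0 + u * Ss)) ≤ EE * (A * (y0 + u * Ss)) :=
      mul_le_mul_of_nonneg_right hEEs hAZ
    have c2 : u * s ^ (j + 1) ≤ (EE * A) * (u * s ^ (j + 1)) :=
      le_mul_of_one_le_left (by positivity) hEA1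
    nlinarith [c1, c2]
  calc yj1 ≤ (ρ + c * ρ ^ (j + 1)) * (s ^ j * (A * (y0 + u * Ss))) + u * ρ ^ (j + 1) := h1
    _ = s ^ (j + 1) * ((s + c * s * ρ ^ j) * (A * (y0 + u * Ss)) + u * s ^ (j + 1)) := halg
    _ ≤ s ^ (j + 1) * (EE * (A * (y0 + u * Ss + u * s ^ (j + 1)))) :=
        mul_le_mul_of_nonneg_left hfin (by positivity)
    _ = s ^ (j + 1) * (Real.exp (c * s * (Sρ + ρ ^ j)) * (y0 + u * (Ss + s ^ (j + 1)))) := by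
        rw [mul_add (c * s), Real.exp_add, ← hA, ← hEE]; ring

set_option maxHeartbeats 2000000 in
lemma arith_main (a b β d₀ c₁ ρ s : ℝ) (ha : 0 ≤ a) (hb : 0 ≤ b) (hβ : 0 ≤ β)
    (hd₀ : 0 ≤ d₀) (hc₁ : 0 < c₁) (hs0 : 0 < s) (hs1 : s < 1) (hss : s * s = ρ) :
    Real.exp (a * b * c₁ * s * (1 - ρ)⁻¹) *
      ((b * d₀ + b * β / (1 - ρ)) + b * c₁ * (1 + a * (b * β / (1 - ρ))) * (s * (1 - s)⁻¹)) ≤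
    b * Real.exp (c₁ * b * (1 + a) * s * (1 + b * β) / (1 - ρ) ^ 2) *
      (d₀ + β / (1 - ρ) + c₁ * (1 + a) * s * (1 + β) / (1 - s) ^ 2) := by
  subst hss
  have h1s : (0:ℝ) < 1 - s := by linarith
  have h1ss : (0:ℝ) < 1 - s * s := by nlinarith
  set X₁ := a * b * c₁ * s * (1 - s * s)⁻¹ with hX₁
  set TX := c₁ * b * (1 + a) * s * (1 + b * β) / (1 - s * s) ^ 2 with hTX
  set DD := TX - X₁ with hDD
  set P : ℝ := b * d₀ + b * β / (1 - s * s) with hP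
  set u₁ : ℝ := b * c₁ * s / (1 - s) with hu₁
  set u₂ : ℝ := a * b * b * β * c₁ * s / ((1 - s) * (1 - s * s)) with hu₂
  set T' : ℝ := b * (c₁ * (1 + a) * s * (1 + β) / (1 - s) ^ 2) with hT'
  have hP0 : 0 ≤ P := by rw [hP]; positivity
  have hT'0 : 0 ≤ T' := by rw [hT']; positivity
  have hu₁0 : 0 ≤ u₁ := by rw [hu₁]; positivity
  have hu₂0 : 0 ≤ u₂ := by rw [hu₂]; positivity
  have hL : (b * d₀ + b * β / (1 - s * s)) + b * c₁ * (1 + a * (b * β / (1 - s * s))) * (s * (1 - s)⁻¹)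
      = P + u₁ + u₂ := by
    rw [hP, hu₁, hu₂]
    field_simp
    ring
  have hu₁T : u₁ ≤ T' := by
    have key : T' - u₁ = b * c₁ * s * (a + β + a * β + s) / (1 - s) ^ 2 := by
      rw [hT', hu₁]; field_simp; ring
    nlinarith [key, div_nonneg (by positivity : (0:ℝ) ≤ b * c₁ * s * (a + β + a * β + s))
      (by positivity : (0:ℝ) ≤ (1 - s) ^ 2)]
  have hDD0 : 0 ≤ DD := by
    have key : DD = c₁ * b * s * (1 + b * β + a * (b * β) + a * (s * s)) / (1 - s * s) ^ 2 := by
      rw [hDD, hTX, hX₁]; field_simp; ring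
    rw [key]; positivity
  have hexpDD : 1 + DD ≤ Real.exp DD := by linarith [Real.add_one_le_exp DD]
  have hcore : P + u₁ + u₂ ≤ Real.exp DD * (P + T') := by
    rcases le_or_gt (a * (1 - s * s) * (1 + s)) ((1 + a) * (b * β)) with hA | hB
    · set D2 : ℝ := c₁ * b * b * β * s * (1 + a) / (1 - s * s) ^ 2 with hD2def
      have hD20 : 0 ≤ D2 := by rw [hD2def]; positivity
      have hD2DD : D2 ≤ DD := by
        have key : DD - D2 = c₁ * b * s * (1 + a * (s * s)) / (1 - s * s) ^ 2 := by
          rw [hDD, hTX, hX₁, hD2def]; field_simp; ring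
        nlinarith [key, div_nonneg (by positivity : (0:ℝ) ≤ c₁ * b * s * (1 + a * (s * s)))
          (by positivity : (0:ℝ) ≤ (1 - s * s) ^ 2)]
      have hbr : 0 ≤ (1 + a) * (b * β) - a * (1 - s * s) * (1 + s) := by linarith
      have hu₂D2 : u₂ ≤ D2 * (b * β / (1 - s * s)) := by
        have key : D2 * (b * β / (1 - s * s)) - u₂
            = b * b * β * c₁ * s * ((1 + a) * (b * β) - a * (1 - s * s) * (1 + s)) / (1 - s * s) ^ 3 := by
          rw [hD2def, hu₂]; field_simp; ring
        have h0 : 0 ≤ b * b * β * c₁ * s * ((1 + a) * (b * β) - a * (1 - s * s) * (1 + s)) / (1 - s * s) ^ 3 :=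
          div_nonneg (mul_nonneg (by positivity) hbr) (by positivity)
        linarith [key ▸ h0]
      have hPlb : b * β / (1 - s * s) ≤ P := by
        rw [hP]; nlinarith [mul_nonneg hb hd₀]
      have hu₂DP : u₂ ≤ DD * P :=
        le_trans hu₂D2 (mul_le_mul hD2DD hPlb (by positivity) hDD0)
      nlinarith [mul_nonneg hDD0 hT'0, mul_nonneg (sub_nonneg.mpr hexpDD) (add_nonneg hP0 hT'0)]
    · have ha1 : (0:ℝ) < 1 + a := by linarith
      have hbr : 0 ≤ (1 + a) * (1 + β) * (1 - s * s) - (1 - s) * (1 - s * s) - a * (b * β) * (1 - s) := by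
        have hint1 : 0 ≤ a * (1 - s) * (a * (1 - s * s) * (1 + s) - (1 + a) * (b * β)) :=
          mul_nonneg (by positivity) (by linarith)
        have hbr2 : 0 ≤ (1 + a) * (1 + a) * (1 + β) - (1 + a) * (1 - s) - a * a * (1 - s * s) := by
          nlinarith [mul_nonneg ha hβ, mul_nonneg (mul_nonneg ha ha) hβ, mul_nonneg hβ hs0.le,
            mul_nonneg ha hs0.le, mul_nonneg (mul_nonneg ha ha) (mul_nonneg hs0.le hs0.le)]
        have hint2 : 0 ≤ (1 - s * s) * ((1 + a) * (1 + a) * (1 + β) - (1 + a) * (1 - s) - a * a * (1 - s * s)) :=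
          mul_nonneg h1ss.le hbr2
        nlinarith [hint1, hint2, ha1]
      have hsum : u₁ + u₂ ≤ T' := by
        have key : T' - (u₁ + u₂) = b * c₁ * s *
            ((1 + a) * (1 + β) * (1 - s * s) - (1 - s) * (1 - s * s) - a * (b * β) * (1 - s))
            / ((1 - s) ^ 2 * (1 - s * s)) := by
          have h1ss' : 1 - s ^ 2 ≠ 0 := by nlinarith
          rw [hT', hu₁, hu₂]; field_simp; ring
        have h0 : 0 ≤ b * c₁ * s *
            ((1 + a) * (1 + β) * (1 - s * s) - (1 - s) * (1 - s * s) - a * (b * β) * (1 - s))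
            / ((1 - s) ^ 2 * (1 - s * s)) :=
          div_nonneg (mul_nonneg (by positivity) hbr) (by positivity)
        linarith [key ▸ h0]
      have h1exp : 1 ≤ Real.exp DD := Real.one_le_exp hDD0
      nlinarith [mul_nonneg (sub_nonneg.mpr h1exp) (add_nonneg hP0 hT'0)]
  have hXDD : X₁ + DD = TX := by rw [hDD]; ring
  calc Real.exp X₁ * ((b * d₀ + b * β / (1 - s * s)) + b * c₁ * (1 + a * (b * β / (1 - s * s))) * (s * (1 - s)⁻¹))
      = Real.exp X₁ * (P + u₁ + u₂) := by rw [hL]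
    _ ≤ Real.exp X₁ * (Real.exp DD * (P + T')) :=
        mul_le_mul_of_nonneg_left hcore (Real.exp_pos _).le
    _ = Real.exp (X₁ + DD) * (P + T') := by rw [Real.exp_add]; ring
    _ = Real.exp TX * (P + T') := by rw [hXDD]
    _ = b * Real.exp TX * (d₀ + β / (1 - s * s) + c₁ * (1 + a) * s * (1 + β) / (1 - s) ^ 2) := by
        rw [hP, hT']; ring

end helpers

set_option maxHeartbeats 1000000 in
/-- Explicit rate for linear convergence: for `Ḡ = Q E Q⁻¹` diagonalizable with
spectral radius at most `ρ < 1`, perturbed iterations `D (k+1) = G k * D k + B k`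
with geometrically converging `G k → Ḡ` and `B k → B̄` converge to
`D̄ = (I - Ḡ)⁻¹ B̄` with rate `√ρ` and explicit constants depending on
`‖Q‖_op, ‖Q⁻¹‖_op, c₁, ‖D 0‖, ‖B̄‖, ρ`. -/
theorem explicit_rate_linear_convergence
    (n m : ℕ) (hn : 0 < n) (hm : 0 < m)
    (ρ c₁ : ℝ) (hρ : ρ ∈ Set.Ioo (0 : ℝ) 1) (hc₁ : 0 < c₁)
    (Q : Matrix (Fin n) (Fin n) ℝ) (hQ : IsUnit Q.det)
    (E : Fin n → ℝ) (hE : ∀ i, |E i| ≤ ρ)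
    (Gbar : Matrix (Fin n) (Fin n) ℝ)
    (hGbar : Gbar = Q * Matrix.diagonal E * Q⁻¹)
    (Bbar : Matrix (Fin n) (Fin m) ℝ)
    (G : ℕ → Matrix (Fin n) (Fin n) ℝ) (B : ℕ → Matrix (Fin n) (Fin m) ℝ)
    (hG : ∀ k, l2OpNorm (G k - Gbar) ≤ c₁ * ρ ^ (k + 1))
    (hB : ∀ k, frobNorm (B k - Bbar) ≤ c₁ * ρ ^ (k + 1))
    (D : ℕ → Matrix (Fin n) (Fin m) ℝ)
    (hD : ∀ k, D (k + 1) = G k * D k + B k) :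
    ∀ k : ℕ,
      frobNorm (D k - (1 - Gbar)⁻¹ * Bbar) ≤
        Real.sqrt ρ ^ k * (l2OpNorm Q * l2OpNorm Q⁻¹) *
          Real.exp (c₁ * l2OpNorm Q⁻¹ * (1 + l2OpNorm Q) * Real.sqrt ρ *
            (1 + l2OpNorm Q⁻¹ * frobNorm Bbar) / (1 - ρ) ^ 2) *
          (frobNorm (D 0) + frobNorm Bbar / (1 - ρ) +
            c₁ * (1 + l2OpNorm Q) * Real.sqrt ρ * (1 + frobNorm Bbar) /
              (1 - Real.sqrt ρ) ^ 2) := by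
  obtain ⟨hρ0, hρ1⟩ := hρ
  intro k
  set s := Real.sqrt ρ with hsdef
  have hs0 : 0 < s := Real.sqrt_pos.mpr hρ0
  have hss : s * s = ρ := Real.mul_self_sqrt hρ0.le
  have hs1 : s < 1 := by nlinarith
  set a := l2OpNorm Q with hadef
  set b := l2OpNorm Q⁻¹ with hbdef
  have ha : 0 ≤ a := norm_nonneg _
  have hb : 0 ≤ b := norm_nonneg _
  have hβ : 0 ≤ frobNorm Bbar := frobNorm_nonneg _
  have h1ρ : (0:ℝ) < 1 - ρ := by linarith
  -- matrix facts
  have hQQi : Q * Q⁻¹ = 1 := Matrix.mul_nonsing_inv Q hQ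
  have hQiQ : Q⁻¹ * Q = 1 := Matrix.nonsing_inv_mul Q hQ
  have cancelQ : ∀ (X : Matrix (Fin n) (Fin m) ℝ), Q * (Q⁻¹ * X) = X := fun X => by
    rw [← Matrix.mul_assoc, hQQi, Matrix.one_mul]
  have cancelQi : ∀ (X : Matrix (Fin n) (Fin n) ℝ), Q⁻¹ * (Q * X) = X := fun X => by
    rw [← Matrix.mul_assoc, hQiQ, Matrix.one_mul]
  have hEpos : ∀ i, (0:ℝ) < 1 - E i := fun i => by
    have h := abs_le.mp (hE i); linarith [h.2]
  set F := Matrix.diagonal (fun i => ((1:ℝ) - E i)⁻¹) with hF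
  have hdiagmul : Matrix.diagonal (fun i => (1:ℝ) - E i) * F = 1 := by
    rw [hF, Matrix.diagonal_mul_diagonal,
      show (fun i => (1 - E i) * (1 - E i)⁻¹) = fun _ : Fin n => (1:ℝ) from
        funext fun i => mul_inv_cancel₀ (hEpos i).ne', Matrix.diagonal_one]
  have hone_sub : (1 : Matrix (Fin n) (Fin n) ℝ) - Gbar
      = Q * Matrix.diagonal (fun i => (1:ℝ) - E i) * Q⁻¹ := by
    have hd : Matrix.diagonal (fun i => (1:ℝ) - E i)
        = 1 - Matrix.diagonal E := by
      rw [← Matrix.diagonal_one, ← Matrix.diagonal_sub]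
    rw [hGbar, hd, Matrix.mul_sub, Matrix.mul_one, Matrix.sub_mul, hQQi]
  have hright : (1 - Gbar) * (Q * F * Q⁻¹) = 1 := by
    rw [hone_sub]
    calc Q * Matrix.diagonal (fun i => (1:ℝ) - E i) * Q⁻¹ * (Q * F * Q⁻¹)
        = Q * Matrix.diagonal (fun i => (1:ℝ) - E i) * (Q⁻¹ * (Q * (F * Q⁻¹))) := by
          rw [Matrix.mul_assoc (Q * Matrix.diagonal fun i => (1:ℝ) - E i), Matrix.mul_assoc Q F]
      _ = Q * Matrix.diagonal (fun i => (1:ℝ) - E i) * (F * Q⁻¹) := by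
          rw [← Matrix.mul_assoc Q⁻¹, hQiQ, Matrix.one_mul]
      _ = Q * (Matrix.diagonal (fun i => (1:ℝ) - E i) * F) * Q⁻¹ := by
          rw [Matrix.mul_assoc Q, Matrix.mul_assoc, Matrix.mul_assoc]
      _ = 1 := by rw [hdiagmul, Matrix.mul_one, hQQi]
  have hinv : (1 - Gbar)⁻¹ = Q * F * Q⁻¹ := Matrix.inv_eq_right_inv hright
  set Dbar := (1 - Gbar)⁻¹ * Bbar with hDbardef
  have hfixpre : (1 - Gbar) * Dbar = Bbar := by
    rw [hDbardef, hinv, ← Matrix.mul_assoc, hright, Matrix.one_mul]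
  have hfix : Gbar * Dbar + Bbar = Dbar := by
    rw [Matrix.sub_mul, Matrix.one_mul] at hfixpre
    rw [← hfixpre]; abel
  have hQiG : Q⁻¹ * Gbar = Matrix.diagonal E * Q⁻¹ := by
    rw [hGbar, ← Matrix.mul_assoc, ← Matrix.mul_assoc, hQiQ, Matrix.one_mul]
  have hQiDbar : Q⁻¹ * Dbar = F * (Q⁻¹ * Bbar) := by
    rw [hDbardef, hinv, Matrix.mul_assoc Q F, Matrix.mul_assoc Q, ← Matrix.mul_assoc,
      hQiQ, Matrix.one_mul, Matrix.mul_assoc]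
  set y : ℕ → ℝ := fun j => frobNorm (Q⁻¹ * (D j - Dbar)) with hy
  set c : ℝ := frobNorm (Q⁻¹ * Dbar) with hcdef
  have hynn : ∀ j, 0 ≤ y j := fun j => frobNorm_nonneg _
  have hcnn : 0 ≤ c := frobNorm_nonneg _
  have hc : c ≤ (1 - ρ)⁻¹ * (b * frobNorm Bbar) := by
    rw [hcdef, hQiDbar, hF]
    calc frobNorm (Matrix.diagonal (fun i => ((1:ℝ) - E i)⁻¹) * (Q⁻¹ * Bbar))
        ≤ (1 - ρ)⁻¹ * frobNorm (Q⁻¹ * Bbar) := by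
          refine frobNorm_diag_mul_le _ _ (by positivity) (fun i => ?_) _
          rw [abs_inv, abs_of_pos (hEpos i)]
          refine inv_anti₀ h1ρ ?_
          have h := abs_le.mp (hE i); linarith [h.1]
      _ ≤ (1 - ρ)⁻¹ * (b * frobNorm Bbar) := by
          refine mul_le_mul_of_nonneg_left ?_ (by positivity)
          exact frobNorm_mul_le _ _
  have hy0 : y 0 ≤ b * frobNorm (D 0) + c := by
    show frobNorm (Q⁻¹ * (D 0 - Dbar)) ≤ b * frobNorm (D 0) + c
    have heq : Q⁻¹ * (D 0 - Dbar) = Q⁻¹ * D 0 - Q⁻¹ * Dbar := by rw [Matrix.mul_sub]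
    rw [heq]
    calc frobNorm (Q⁻¹ * D 0 - Q⁻¹ * Dbar)
        ≤ frobNorm (Q⁻¹ * D 0) + frobNorm (Q⁻¹ * Dbar) := frobNorm_sub_le _ _
      _ ≤ b * frobNorm (D 0) + c := by
          have h1 := frobNorm_mul_le Q⁻¹ (D 0)
          have h2 : frobNorm (Q⁻¹ * Dbar) = c := hcdef.symm
          linarith
  have hDk : ∀ j, frobNorm (D j) ≤ a * (y j + c) := by
    intro j
    have hsplit : Q⁻¹ * (D j - Dbar) + Q⁻¹ * Dbar = Q⁻¹ * D j := by
      rw [← Matrix.mul_add]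
      congr 1
      abel
    have heq : Q * (Q⁻¹ * (D j - Dbar) + Q⁻¹ * Dbar) = D j := by
      rw [hsplit, cancelQ]
    calc frobNorm (D j) = frobNorm (Q * (Q⁻¹ * (D j - Dbar) + Q⁻¹ * Dbar)) := by rw [heq]
      _ ≤ a * frobNorm (Q⁻¹ * (D j - Dbar) + Q⁻¹ * Dbar) := frobNorm_mul_le _ _
      _ ≤ a * (y j + c) := by
          refine mul_le_mul_of_nonneg_left ?_ ha
          exact frobNorm_add_le _ _
  have hrec : ∀ j, y (j + 1) ≤ (ρ + (a * b * c₁) * ρ ^ (j + 1)) * y j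
      + (b * c₁ * (1 + a * c)) * ρ ^ (j + 1) := by
    intro j
    have e1 : Matrix.diagonal E * (Q⁻¹ * (D j - Dbar)) = Q⁻¹ * (Gbar * (D j - Dbar)) := by
      rw [← Matrix.mul_assoc, ← hQiG, Matrix.mul_assoc]
    have e2 : Gbar * (D j - Dbar) + ((G j - Gbar) * D j + (B j - Bbar))
        = G j * D j + B j - (Gbar * Dbar + Bbar) := by
      rw [Matrix.mul_sub, Matrix.sub_mul]; abel
    have hkeyM : Q⁻¹ * (D (j + 1) - Dbar) = Matrix.diagonal E * (Q⁻¹ * (D j - Dbar))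
        + (Q⁻¹ * ((G j - Gbar) * D j) + Q⁻¹ * (B j - Bbar)) := by
      rw [e1, ← Matrix.mul_add, ← Matrix.mul_add]
      congr 1
      rw [hD j, e2, hfix]
    have t1 : frobNorm (Matrix.diagonal E * (Q⁻¹ * (D j - Dbar))) ≤ ρ * y j :=
      frobNorm_diag_mul_le E ρ hρ0.le hE _
    have t2 : frobNorm (Q⁻¹ * ((G j - Gbar) * D j)) ≤ b * (c₁ * ρ ^ (j + 1) * (a * (y j + c))) := by
      calc frobNorm (Q⁻¹ * ((G j - Gbar) * D j))
          ≤ b * frobNorm ((G j - Gbar) * D j) := frobNorm_mul_le _ _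
        _ ≤ b * (c₁ * ρ ^ (j + 1) * (a * (y j + c))) := by
            refine mul_le_mul_of_nonneg_left ?_ hb
            calc frobNorm ((G j - Gbar) * D j)
                ≤ l2OpNorm (G j - Gbar) * frobNorm (D j) := frobNorm_mul_le _ _
              _ ≤ c₁ * ρ ^ (j + 1) * (a * (y j + c)) := by
                  refine mul_le_mul (hG j) (hDk j) (frobNorm_nonneg _) (by positivity)
    have t3 : frobNorm (Q⁻¹ * (B j - Bbar)) ≤ b * (c₁ * ρ ^ (j + 1)) := by
      calc frobNorm (Q⁻¹ * (B j - Bbar)) ≤ b * frobNorm (B j - Bbar) := frobNorm_mul_le _ _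
        _ ≤ b * (c₁ * ρ ^ (j + 1)) := mul_le_mul_of_nonneg_left (hB j) hb
    have tri : y (j + 1) ≤ frobNorm (Matrix.diagonal E * (Q⁻¹ * (D j - Dbar)))
        + (frobNorm (Q⁻¹ * ((G j - Gbar) * D j)) + frobNorm (Q⁻¹ * (B j - Bbar))) := by
      show frobNorm (Q⁻¹ * (D (j + 1) - Dbar)) ≤ _
      rw [hkeyM]
      calc frobNorm (Matrix.diagonal E * (Q⁻¹ * (D j - Dbar))
            + (Q⁻¹ * ((G j - Gbar) * D j) + Q⁻¹ * (B j - Bbar)))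
          ≤ frobNorm (Matrix.diagonal E * (Q⁻¹ * (D j - Dbar)))
            + frobNorm (Q⁻¹ * ((G j - Gbar) * D j) + Q⁻¹ * (B j - Bbar)) := frobNorm_add_le _ _
        _ ≤ _ := by linarith [frobNorm_add_le (Q⁻¹ * ((G j - Gbar) * D j)) (Q⁻¹ * (B j - Bbar))]
    have := hynn j
    nlinarith [t1, t2, t3, tri]
  -- induction
  have hind : ∀ j, y j ≤ s ^ j * (Real.exp ((a * b * c₁) * s * (∑ i ∈ Finset.range j, ρ ^ i))
      * (y 0 + (b * c₁ * (1 + a * c)) * (∑ i ∈ Finset.range j, s ^ (i + 1)))) := by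
    intro j
    induction j with
    | zero => simp
    | succ j ih =>
      rw [Finset.sum_range_succ, Finset.sum_range_succ]
      exact ind_step s (a * b * c₁) ρ j (y j) (y (j + 1)) (y 0) (b * c₁ * (1 + a * c))
        (∑ i ∈ Finset.range j, ρ ^ i) (∑ i ∈ Finset.range j, s ^ (i + 1))
        hs0 hs1 hss (by positivity) (hynn 0)
        (mul_nonneg (mul_nonneg hb hc₁.le) (by nlinarith [mul_nonneg ha hcnn]))
        (Finset.sum_nonneg fun i _ => by positivity)
        (Finset.sum_nonneg fun i _ => by positivity)
        (hrec j) ih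
  have hSρ := my_geom_le ρ hρ0.le hρ1 k
  have hSs : ∑ i ∈ Finset.range k, s ^ (i + 1) ≤ s * (1 - s)⁻¹ := by
    have h1 : ∑ i ∈ Finset.range k, s ^ (i + 1) = s * ∑ i ∈ Finset.range k, s ^ i := by
      rw [Finset.mul_sum]
      exact Finset.sum_congr rfl fun i _ => by ring
    rw [h1]
    exact mul_le_mul_of_nonneg_left (my_geom_le s hs0.le hs1 k) hs0.le
  have hyk : y k ≤ s ^ k * (Real.exp ((a * b * c₁) * s * (1 - ρ)⁻¹)
      * (y 0 + (b * c₁ * (1 + a * c)) * (s * (1 - s)⁻¹))) := by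
    refine le_trans (hind k) ?_
    have hu0nn : 0 ≤ b * c₁ * (1 + a * c) :=
      mul_nonneg (mul_nonneg hb hc₁.le) (by nlinarith [mul_nonneg ha hcnn])
    refine mul_le_mul_of_nonneg_left ?_ (by positivity)
    exact mul_le_mul (Real.exp_le_exp.mpr (mul_le_mul_of_nonneg_left hSρ (by positivity)))
      (add_le_add le_rfl (mul_le_mul_of_nonneg_left hSs hu0nn))
      (add_nonneg (hynn 0) (mul_nonneg hu0nn (Finset.sum_nonneg fun i _ => by positivity)))
      (Real.exp_pos _).le
  have hfinal1 : frobNorm (D k - Dbar) ≤ a * y k := by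
    have heq : Q * (Q⁻¹ * (D k - Dbar)) = D k - Dbar := cancelQ _
    calc frobNorm (D k - Dbar) = frobNorm (Q * (Q⁻¹ * (D k - Dbar))) := by rw [heq]
      _ ≤ a * y k := frobNorm_mul_le _ _
  -- monotone replacement of c and y 0
  have hcb : c ≤ b * frobNorm Bbar / (1 - ρ) := by
    have : b * frobNorm Bbar / (1 - ρ) = (1 - ρ)⁻¹ * (b * frobNorm Bbar) := by ring
    linarith [hc, this]
  have hmono : y 0 + (b * c₁ * (1 + a * c)) * (s * (1 - s)⁻¹)
      ≤ (b * frobNorm (D 0) + b * frobNorm Bbar / (1 - ρ))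
        + b * c₁ * (1 + a * (b * frobNorm Bbar / (1 - ρ))) * (s * (1 - s)⁻¹) := by
    have h1s : (0:ℝ) < 1 - s := by linarith
    have h2 : (b * c₁ * (1 + a * c)) ≤ b * c₁ * (1 + a * (b * frobNorm Bbar / (1 - ρ))) := by
      have := mul_le_mul_of_nonneg_left hcb ha
      nlinarith [mul_nonneg hb hc₁.le]
    have h3 : (0:ℝ) ≤ s * (1 - s)⁻¹ := by positivity
    have h4 := mul_le_mul_of_nonneg_right h2 h3
    have h5 : y 0 ≤ b * frobNorm (D 0) + b * frobNorm Bbar / (1 - ρ) := by linarith [hy0, hcb]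
    linarith
  have harith := arith_main a b (frobNorm Bbar) (frobNorm (D 0)) c₁ ρ s ha hb hβ
    (frobNorm_nonneg _) hc₁ hs0 hs1 hss
  have hchain : a * y k ≤ s ^ k * (a * b) * Real.exp (c₁ * b * (1 + a) * s * (1 + b * frobNorm Bbar) / (1 - ρ) ^ 2)
      * (frobNorm (D 0) + frobNorm Bbar / (1 - ρ) + c₁ * (1 + a) * s * (1 + frobNorm Bbar) / (1 - s) ^ 2) := by
    have step1 : a * y k ≤ a * (s ^ k * (Real.exp ((a * b * c₁) * s * (1 - ρ)⁻¹)
        * (y 0 + (b * c₁ * (1 + a * c)) * (s * (1 - s)⁻¹)))) :=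
      mul_le_mul_of_nonneg_left hyk ha
    have step2 : Real.exp ((a * b * c₁) * s * (1 - ρ)⁻¹)
        * (y 0 + (b * c₁ * (1 + a * c)) * (s * (1 - s)⁻¹))
        ≤ Real.exp (a * b * c₁ * s * (1 - ρ)⁻¹)
        * ((b * frobNorm (D 0) + b * frobNorm Bbar / (1 - ρ))
          + b * c₁ * (1 + a * (b * frobNorm Bbar / (1 - ρ))) * (s * (1 - s)⁻¹)) :=
      mul_le_mul_of_nonneg_left hmono (Real.exp_pos _).le
    have step3 := le_trans step2 harith
    calc a * y k ≤ a * (s ^ k * (Real.exp ((a * b * c₁) * s * (1 - ρ)⁻¹)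
        * (y 0 + (b * c₁ * (1 + a * c)) * (s * (1 - s)⁻¹)))) := step1
      _ ≤ a * (s ^ k * (b * Real.exp (c₁ * b * (1 + a) * s * (1 + b * frobNorm Bbar) / (1 - ρ) ^ 2)
          * (frobNorm (D 0) + frobNorm Bbar / (1 - ρ) + c₁ * (1 + a) * s * (1 + frobNorm Bbar) / (1 - s) ^ 2))) := by
          refine mul_le_mul_of_nonneg_left (mul_le_mul_of_nonneg_left step3 (by positivity)) ha
      _ = s ^ k * (a * b) * Real.exp (c₁ * b * (1 + a) * s * (1 + b * frobNorm Bbar) / (1 - ρ) ^ 2)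
          * (frobNorm (D 0) + frobNorm Bbar / (1 - ρ) + c₁ * (1 + a) * s * (1 + frobNorm Bbar) / (1 - s) ^ 2) := by
          ring
  exact le_trans hfinal1 hchain
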